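/- Let f: I → ℝ be a C² function on an interval I ⊂ ℝ, and suppose |f''(θ)| ≥ c > 0 for all θ ∈ I. Then for every λ > 0, the Lebesgue measure of {θ ∈ I : |f(θ)| ≤ λ} is at most C·(λ/c)^(1/2) for an absolute constant C. -/

import Mathlib

open MeasureTheory

/-- A set of reals of "diameter" at most `d` has measure at most `d`. -/
lemma diam_vol_bound (S : Set ℝ) (d : ℝ)
    (h : ∀ x ∈ S, ∀ y ∈ S, y - x ≤ d) :
    volume S ≤ ENNReal.ofReal d := by
  rcases S.eq_empty_or_nonempty with h0 | ⟨x0, hx0⟩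
  · simp [h0]
  · have hbdd : BddBelow S := ⟨x0 - d, fun x hx => by have := h x hx x0 hx0; linarith⟩
    have hsub : S ⊆ Set.Icc (sInf S) (sInf S + d) := by
      intro y hy
      refine ⟨csInf_le hbdd hy, ?_⟩
      have hlb : ∀ x ∈ S, y - d ≤ x := fun x hx => by have := h x hx y hy; linarith
      have : y - d ≤ sInf S := le_csInf ⟨x0, hx0⟩ hlb
      linarith
    calc volume S ≤ volume (Set.Icc (sInf S) (sInf S + d)) := measure_mono hsub
      _ = ENNReal.ofReal d := by rw [Real.volume_Icc]; ring_nf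

/-- Main case: `f'' ≥ c` on `[a,b]`. -/
lemma key (a b : ℝ) (f f' f'' : ℝ → ℝ) (c : ℝ) (hc : 0 < c)
    (hf : ∀ θ ∈ Set.Icc a b, HasDerivAt f (f' θ) θ)
    (hf' : ∀ θ ∈ Set.Icc a b, HasDerivAt f' (f'' θ) θ)
    (hpos : ∀ θ ∈ Set.Icc a b, c ≤ f'' θ)
    (lam : ℝ) (hlam : 0 < lam) :
    (volume {θ ∈ Set.Icc a b | |f θ| ≤ lam}).toReal ≤ 6 * (lam / c) ^ ((1:ℝ)/2) := by
  set K := Set.Icc a b with hK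
  set s := Real.sqrt (lam * c) with hs
  have hs0 : 0 < s := Real.sqrt_pos.2 (by positivity)
  have hs2 : s ^ 2 = lam * c := Real.sq_sqrt (by positivity)
  -- f' continuity and monotonicity with slope c
  have hfc : ContinuousOn f K := fun θ hθ => (hf θ hθ).continuousAt.continuousWithinAt
  have hf'c : ContinuousOn f' K := fun θ hθ => (hf' θ hθ).continuousAt.continuousWithinAt
  have hintK : interior K ⊆ K := interior_subset
  have hmono : ∀ x ∈ K, ∀ y ∈ K, x ≤ y → c * (y - x) ≤ f' y - f' x := by
    refine (convex_Icc a b).mul_sub_le_image_sub_of_le_deriv hf'c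
      (fun θ hθ => ((hf' θ (hintK hθ)).differentiableAt).differentiableWithinAt) ?_
    intro θ hθ
    rw [(hf' θ (hintK hθ)).deriv]
    exact hpos θ (hintK hθ)
  have hmono' : ∀ x ∈ K, ∀ y ∈ K, x ≤ y → f' x ≤ f' y := by
    intro x hx y hy hxy
    nlinarith [hmono x hx y hy hxy]
  -- growth of f on regions where |f'| ≥ s
  have hgrow : ∀ x ∈ K, ∀ y ∈ K, x ≤ y → s ≤ f' x → s * (y - x) ≤ f y - f x := by
    intro x hx y hy hxy hsx
    have hsubK : Set.Icc x y ⊆ K := (convex_Icc a b).ordConnected.out hx hy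
    refine (convex_Icc x y).mul_sub_le_image_sub_of_le_deriv (hfc.mono hsubK)
      (fun θ hθ => ((hf θ (hsubK (interior_subset hθ))).differentiableAt).differentiableWithinAt)
      ?_ x (Set.left_mem_Icc.2 hxy) y (Set.right_mem_Icc.2 hxy) hxy
    intro θ hθ
    have hθ' : θ ∈ Set.Icc x y := interior_subset hθ
    rw [(hf θ (hsubK hθ')).deriv]
    exact le_trans hsx (hmono' x hx θ (hsubK hθ') hθ'.1)
  have hdecay : ∀ x ∈ K, ∀ y ∈ K, x ≤ y → f' y ≤ -s → f y - f x ≤ -s * (y - x) := by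
    intro x hx y hy hxy hsy
    have hsubK : Set.Icc x y ⊆ K := (convex_Icc a b).ordConnected.out hx hy
    refine (convex_Icc x y).image_sub_le_mul_sub_of_deriv_le (hfc.mono hsubK)
      (fun θ hθ => ((hf θ (hsubK (interior_subset hθ))).differentiableAt).differentiableWithinAt)
      ?_ x (Set.left_mem_Icc.2 hxy) y (Set.right_mem_Icc.2 hxy) hxy
    intro θ hθ
    have hθ' : θ ∈ Set.Icc x y := interior_subset hθ
    rw [(hf θ (hsubK hθ')).deriv]
    exact le_trans (hmono' θ (hsubK hθ') y hy hθ'.2) hsy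
  -- the three pieces
  set E := {θ ∈ K | |f θ| ≤ lam} with hE
  set SA := {θ ∈ E | f' θ ≤ -s} with hSA
  set SB := {θ ∈ E | -s ≤ f' θ ∧ f' θ ≤ s} with hSB
  set SD := {θ ∈ E | s ≤ f' θ} with hSD
  have hcover : E ⊆ SA ∪ SB ∪ SD := by
    intro θ hθ
    rcases le_or_gt (f' θ) (-s) with h1 | h1
    · exact Or.inl (Or.inl ⟨hθ, h1⟩)
    rcases le_or_gt (f' θ) s with h2 | h2
    · exact Or.inl (Or.inr ⟨hθ, le_of_lt h1, h2⟩)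
    · exact Or.inr ⟨hθ, le_of_lt h2⟩
  have hvA : volume SA ≤ ENNReal.ofReal (2 * lam / s) := by
    apply diam_vol_bound
    rintro x ⟨⟨hxK, hxf⟩, hxs⟩ y ⟨⟨hyK, hyf⟩, hys⟩
    rcases le_or_gt x y with hxy | hxy
    · have := hdecay x hxK y hyK hxy hys
      have h1 : -lam ≤ f y := neg_le_of_abs_le hyf
      have h2 : f x ≤ lam := le_of_abs_le hxf
      rw [le_div_iff₀ hs0]
      nlinarith
    · nlinarith [div_nonneg (by linarith : (0:ℝ) ≤ 2 * lam) hs0.le]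
  have hvD : volume SD ≤ ENNReal.ofReal (2 * lam / s) := by
    apply diam_vol_bound
    rintro x ⟨⟨hxK, hxf⟩, hxs⟩ y ⟨⟨hyK, hyf⟩, hys⟩
    rcases le_or_gt x y with hxy | hxy
    · have := hgrow x hxK y hyK hxy hxs
      have h1 : -lam ≤ f x := neg_le_of_abs_le hxf
      have h2 : f y ≤ lam := le_of_abs_le hyf
      rw [le_div_iff₀ hs0]
      nlinarith
    · nlinarith [div_nonneg (by linarith : (0:ℝ) ≤ 2 * lam) hs0.le]
  have hvB : volume SB ≤ ENNReal.ofReal (2 * s / c) := by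
    apply diam_vol_bound
    rintro x ⟨⟨hxK, _⟩, hxs1, hxs2⟩ y ⟨⟨hyK, _⟩, hys1, hys2⟩
    rcases le_or_gt x y with hxy | hxy
    · have := hmono x hxK y hyK hxy
      rw [le_div_iff₀ hc]
      nlinarith
    · nlinarith [div_nonneg (by linarith : (0:ℝ) ≤ 2 * s) hc.le]
  -- combine
  have htotal : volume E ≤ ENNReal.ofReal (2 * s / c + (2 * lam / s + 2 * lam / s)) := by
    calc volume E ≤ volume (SA ∪ SB ∪ SD) := measure_mono hcover
      _ ≤ volume (SA ∪ SB) + volume SD := measure_union_le _ _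
      _ ≤ volume SA + volume SB + volume SD := by
          exact add_le_add_left (measure_union_le _ _) _
      _ ≤ ENNReal.ofReal (2 * lam / s) + ENNReal.ofReal (2 * s / c)
            + ENNReal.ofReal (2 * lam / s) := by
          exact add_le_add (add_le_add hvA hvB) hvD
      _ ≤ ENNReal.ofReal (2 * s / c + (2 * lam / s + 2 * lam / s)) := by
          rw [ENNReal.ofReal_add (by positivity) (by positivity),
            ENNReal.ofReal_add (by positivity) (by positivity)]
          ring_nf
          exact le_refl _
  have hreal : (volume E).toReal ≤ 2 * s / c + (2 * lam / s + 2 * lam / s) :=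
    ENNReal.toReal_le_of_le_ofReal (by positivity) htotal
  -- arithmetic: 2s/c + 4λ/s = 6 √(λ/c)
  have hrt : (lam / c) ^ ((1:ℝ)/2) = s / c := by
    rw [← Real.sqrt_eq_rpow]
    rw [show lam / c = (s / c) ^ 2 by field_simp; nlinarith]
    exact Real.sqrt_sq (by positivity)
  have hls : lam / s = s / c := by
    field_simp
    nlinarith
  rw [hrt]
  have : 2 * lam / s = 2 * (s / c) := by rw [mul_div_assoc, hls]
  calc (volume E).toReal ≤ 2 * s / c + (2 * lam / s + 2 * lam / s) := hreal
    _ = 6 * (s / c) := by rw [this]; ring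
    _ ≤ 6 * (s / c) := le_refl _

theorem stmt_1 :
    ∃ C : ℝ, 0 < C ∧
      ∀ (a b : ℝ) (f f' f'' : ℝ → ℝ) (c : ℝ), 0 < c →
        (∀ θ ∈ Set.Icc a b, HasDerivAt f (f' θ) θ) →
        (∀ θ ∈ Set.Icc a b, HasDerivAt f' (f'' θ) θ) →
        ContinuousOn f'' (Set.Icc a b) →
        (∀ θ ∈ Set.Icc a b, c ≤ |f'' θ|) →
        ∀ lam : ℝ, 0 < lam →
          (volume {θ ∈ Set.Icc a b | |f θ| ≤ lam}).toReal ≤ C * (lam / c) ^ ((1:ℝ)/2) := by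
  refine ⟨6, by norm_num, ?_⟩
  intro a b f f' f'' c hc hf hf' hf''c habs lam hlam
  -- sign dichotomy for f''
  have hdich : (∀ θ ∈ Set.Icc a b, c ≤ f'' θ) ∨ (∀ θ ∈ Set.Icc a b, f'' θ ≤ -c) := by
    by_contra h
    push_neg at h
    obtain ⟨⟨x, hx, hxlt⟩, ⟨y, hy, hygt⟩⟩ := h
    have hxneg : f'' x ≤ -c := by
      rcases abs_cases (f'' x) with ⟨h1, _⟩ | ⟨h1, _⟩
      · linarith [habs x hx]
      · linarith [habs x hx]
    have hypos : c ≤ f'' y := by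
      rcases abs_cases (f'' y) with ⟨h1, _⟩ | ⟨h1, _⟩
      · linarith [habs y hy]
      · linarith [habs y hy]
    have hsub : Set.uIcc x y ⊆ Set.Icc a b :=
      (Set.ordConnected_Icc).uIcc_subset hx hy
    have := intermediate_value_uIcc (hf''c.mono hsub)
    have h0 : (0:ℝ) ∈ Set.uIcc (f'' x) (f'' y) :=
      Set.mem_uIcc.2 (Or.inl ⟨by linarith, by linarith⟩)
    obtain ⟨z, hz, hz0⟩ := this h0
    have := habs z (hsub hz)
    rw [hz0] at this
    simp at this
    linarith
  rcases hdich with hpos | hneg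
  · exact key a b f f' f'' c hc hf hf' hpos lam hlam
  · have hset : {θ ∈ Set.Icc a b | |f θ| ≤ lam}
        = {θ ∈ Set.Icc a b | |(-f) θ| ≤ lam} := by
      ext θ; simp [abs_neg]
    rw [hset]
    exact key a b (-f) (-f') (-f'') c hc
      (fun θ hθ => by simpa using (hf θ hθ).neg)
      (fun θ hθ => by simpa using (hf' θ hθ).neg)
      (fun θ hθ => by have := hneg θ hθ; simp only [Pi.neg_apply]; linarith) lam hlam
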